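/- Assume Hypotheses 1 and 2. Let U : O_d → ℝ^d be twice continuously differentiable with bounded first and second derivatives, let U be a monotone solution of the stationary master equation, and suppose that for every x ∈ O_d the Jacobian D_x U(x) is positive definite, i.e. ⟨ξ, D_x U(x) ξ⟩ > 0 for every ξ ∈ ℝ^d, ξ ≠ 0. Then for every i ∈ {1,...,d}: r U^i(x) + ⟨F(x,U(x)), ∇_x U^i(x)⟩ + λ(U^i(x) − (T* U(Tx))^i) = G^i(x,U(x)) at every x ∈ O_d with x_i > 0, and r U^i(x) + ⟨F(x,U(x)), ∇_x U^i(x)⟩ + λ(U^i(x) − (T* U(Tx))^i) ≤ G^i(x,U(x)) at every x ∈ O_d with x_i = 0. -/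

import Mathlib

open scoped RealInnerProductSpace
noncomputable section

/-- `ℝ^d` with the Euclidean inner product. -/
abbrev Euc (d : ℕ) := EuclideanSpace ℝ (Fin d)

/-- The positive orthant `O_d = (ℝ≥0)^d`. -/
def Od (d : ℕ) : Set (Euc d) := {x | ∀ i, 0 ≤ x i}

/-- `B_R = {x ∈ O_d : x_1 + ... + x_d ≤ R}`. -/
def Ball1 (d : ℕ) (R : ℝ) : Set (Euc d) := {x | x ∈ Od d ∧ ∑ i, x i ≤ R}

/-- Monotone solution of the stationary master equation (Definition 2.1), with threshold
`R₁ ≥ R₀` where `R₀` is the constant of Hypothesis 2. -/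
def IsMonotoneSolS (d : ℕ) (F G : Euc d → Euc d → Euc d) (r lam : ℝ)
    (T : Euc d →L[ℝ] Euc d) (R₀ : ℝ) (U : Euc d → Euc d) : Prop :=
  ContinuousOn U (Od d) ∧
  ∃ R₁ ≥ R₀, ∀ R ≥ R₁, ∀ V : Euc d, ∀ y ∈ Od d, ∀ x₀ ∈ Ball1 d R,
    (∀ x ∈ Ball1 d R, x ≠ x₀ → ⟪U x₀ - V, x₀ - y⟫ < ⟪U x - V, x - y⟫) →
    ⟪G x₀ (U x₀), x₀ - y⟫ + ⟪F x₀ (U x₀), U x₀ - V⟫ ≤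
      r * ⟪U x₀, x₀ - y⟫
        + lam * ⟪U x₀ - ContinuousLinearMap.adjoint T (U (T x₀)), x₀ - y⟫

lemma convex_Od (d : ℕ) : Convex ℝ (Od d) := by
  intro x hx y hy a b ha hb hab i
  simp only [PiLp.add_apply, PiLp.smul_apply, smul_eq_mul]
  have := hx i; have := hy i
  positivity

lemma convex_Ball1 (d : ℕ) (R : ℝ) : Convex ℝ (Ball1 d R) := by
  intro x hx y hy a b ha hb hab
  refine ⟨convex_Od d hx.1 hy.1 ha hb hab, ?_⟩
  simp only [PiLp.add_apply, PiLp.smul_apply, smul_eq_mul, Finset.sum_add_distrib,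
    ← Finset.mul_sum]
  have e1 : a * ∑ i, x i ≤ a * R := mul_le_mul_of_nonneg_left hx.2 ha
  have e2 : b * ∑ i, y i ≤ b * R := mul_le_mul_of_nonneg_left hy.2 hb
  have e3 : a * R + b * R = R := by rw [← add_mul, hab, one_mul]
  linarith

lemma isCompact_Ball1 (d : ℕ) (R : ℝ) (hR : 0 ≤ R) : IsCompact (Ball1 d R) := by
  have hcl : IsClosed (Ball1 d R) := by
    have : Ball1 d R = (⋂ i, {x : Euc d | 0 ≤ x i}) ∩ {x : Euc d | ∑ i, x i ≤ R} := by
      ext x; simp [Ball1, Od, Set.mem_iInter]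
    rw [this]
    refine IsClosed.inter (isClosed_iInter fun i => ?_) ?_
    · exact isClosed_le continuous_const (EuclideanSpace.proj (𝕜 := ℝ) i).continuous
    · exact isClosed_le (continuous_finset_sum _ fun i _ =>
        (EuclideanSpace.proj (𝕜 := ℝ) i).continuous) continuous_const
  refine (isCompact_closedBall (0 : Euc d) R).of_isClosed_subset hcl ?_
  intro x hx
  have hxn : ∀ i, 0 ≤ x i := hx.1
  have h1 : ∑ i, (x i) ^ 2 ≤ (∑ i, x i) ^ 2 := by
    rw [sq (∑ i, x i), Finset.sum_mul]
    refine Finset.sum_le_sum fun i _ => ?_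
    rw [sq]
    exact mul_le_mul_of_nonneg_left (Finset.single_le_sum (fun j _ => hxn j)
      (Finset.mem_univ i)) (hxn i)
  have h2 : (∑ i, x i) ^ 2 ≤ R ^ 2 := by
    have h0 : 0 ≤ ∑ i, x i := Finset.sum_nonneg fun j _ => hxn j
    exact pow_le_pow_left₀ h0 hx.2 2
  rw [Metric.mem_closedBall, dist_zero_right, EuclideanSpace.norm_eq]
  have hnn : ∑ i, ‖x i‖ ^ 2 = ∑ i, (x i) ^ 2 :=
    Finset.sum_congr rfl fun i _ => by rw [Real.norm_eq_abs, sq_abs]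
  rw [hnn]
  calc Real.sqrt (∑ i, (x i) ^ 2) ≤ Real.sqrt (R ^ 2) := Real.sqrt_le_sqrt (h1.trans h2)
    _ = R := Real.sqrt_sq hR

lemma coercive (d : ℕ) (hd : 1 ≤ d) (R : ℝ) (hR : 0 ≤ R)
    (U : Euc d → Euc d) (hU2 : ContDiff ℝ 2 U)
    (hUpos : ∀ x ∈ Od d, ∀ ξ : Euc d, ξ ≠ 0 → 0 < ⟪ξ, fderiv ℝ U x ξ⟫) :
    ∃ c > 0, ∀ z ∈ Ball1 d R, ∀ ξ : Euc d, c * ‖ξ‖ ^ 2 ≤ ⟪ξ, fderiv ℝ U z ξ⟫ := by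
  set A := fderiv ℝ U with hA
  have hAc : Continuous A := hU2.continuous_fderiv two_ne_zero
  set K : Set (Euc d × Euc d) := Ball1 d R ×ˢ Metric.sphere (0 : Euc d) 1 with hK
  have hKc : IsCompact K :=
    (isCompact_Ball1 d R hR).prod (isCompact_sphere _ _)
  have hKne : K.Nonempty := by
    refine ⟨(0, EuclideanSpace.single ⟨0, hd⟩ (1 : ℝ)), ⟨fun i => le_refl 0, ?_⟩, ?_⟩
    · simpa using hR
    · simp [EuclideanSpace.norm_single]
  have hφc : Continuous fun p : Euc d × Euc d => ⟪p.2, A p.1 p.2⟫ := by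
    have h1 : Continuous fun p : Euc d × Euc d => A p.1 p.2 :=
      isBoundedBilinearMap_apply.continuous.comp ((hAc.comp continuous_fst).prodMk
        continuous_snd)
    exact continuous_snd.inner h1
  obtain ⟨p₀, hp₀K, hp₀min'⟩ := hKc.exists_isMinOn hKne hφc.continuousOn
  have hp₀min := isMinOn_iff.mp hp₀min'
  have hp₀1 : ‖p₀.2‖ = 1 := by
    have := hp₀K.2; rwa [mem_sphere_zero_iff_norm] at this
  have hcpos : 0 < ⟪p₀.2, A p₀.1 p₀.2⟫ := by
    refine hUpos p₀.1 hp₀K.1.1 p₀.2 ?_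
    intro h; rw [h] at hp₀1; simp at hp₀1
  refine ⟨_, hcpos, ?_⟩
  intro z hz ξ
  rcases eq_or_ne ξ 0 with rfl | hξ
  · simp
  · have hξn : 0 < ‖ξ‖ := norm_pos_iff.mpr hξ
    set u : Euc d := ‖ξ‖⁻¹ • ξ with hu
    have hun : ‖u‖ = 1 := by
      rw [hu, norm_smul, norm_inv, norm_norm, inv_mul_cancel₀ hξn.ne']
    have humem : (z, u) ∈ K := ⟨hz, by rwa [mem_sphere_zero_iff_norm]⟩
    have hmin := hp₀min (z, u) humem
    have hexp : ⟪u, A z u⟫ = ‖ξ‖⁻¹ * (‖ξ‖⁻¹ * ⟪ξ, A z ξ⟫) := by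
      rw [hu, map_smul, real_inner_smul_left, real_inner_smul_right]
    calc ⟪p₀.2, A p₀.1 p₀.2⟫ * ‖ξ‖ ^ 2 ≤ ⟪u, A z u⟫ * ‖ξ‖ ^ 2 :=
          mul_le_mul_of_nonneg_right hmin (by positivity)
      _ = ⟪ξ, A z ξ⟫ := by
          rw [hexp]
          have harith : ∀ a I : ℝ, a ≠ 0 → a⁻¹ * (a⁻¹ * I) * a ^ 2 = I := by
            intro a I ha; field_simp
          exact harith _ _ hξn.ne' 

lemma mono_quant (d : ℕ) (R c : ℝ)
    (U : Euc d → Euc d) (hU2 : ContDiff ℝ 2 U)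
    (hc : ∀ z ∈ Ball1 d R, ∀ ξ : Euc d, c * ‖ξ‖ ^ 2 ≤ ⟪ξ, fderiv ℝ U z ξ⟫) :
    ∀ x ∈ Ball1 d R, ∀ x₀ ∈ Ball1 d R,
      c * ‖x - x₀‖ ^ 2 ≤ ⟪U x - U x₀, x - x₀⟫ := by
  intro x hx x₀ hx₀
  set A := fderiv ℝ U with hA
  set v : Euc d := x - x₀ with hv
  set b : ℝ := c * ‖v‖ ^ 2 with hb
  have hUdiff : Differentiable ℝ U := hU2.differentiable two_ne_zero
  set g : ℝ → ℝ := fun t => ⟪U (x₀ + t • v), v⟫ - t * b with hg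
  have hgd : ∀ t : ℝ, HasDerivAt g (⟪fderiv ℝ U (x₀ + t • v) v, v⟫ - b) t := by
    intro t
    have hγ : HasDerivAt (fun s : ℝ => x₀ + s • v) v t := by
      simpa using ((hasDerivAt_id t).smul_const v).const_add x₀
    have hf : HasDerivAt (fun s : ℝ => U (x₀ + s • v)) (A (x₀ + t • v) v) t :=
      (hUdiff (x₀ + t • v)).hasFDerivAt.comp_hasDerivAt t hγ
    have h1 : HasDerivAt (fun s : ℝ => ⟪U (x₀ + s • v), v⟫) ⟪A (x₀ + t • v) v, v⟫ t := by
      simpa using HasDerivAt.inner ℝ hf (hasDerivAt_const t v)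
    exact h1.sub (hasDerivAt_mul_const b)
  have hgdiff : Differentiable ℝ g := fun t => (hgd t).differentiableAt
  have hmono : MonotoneOn g (Set.Icc (0 : ℝ) 1) := by
    refine monotoneOn_of_deriv_nonneg (convex_Icc 0 1) hgdiff.continuous.continuousOn
      hgdiff.differentiableOn ?_
    intro t ht
    rw [interior_Icc] at ht
    rw [(hgd t).deriv]
    have hzmem : x₀ + t • v ∈ Ball1 d R := by
      have : x₀ + t • v = (1 - t) • x₀ + t • x := by
        rw [hv]; module
      rw [this]
      exact convex_Ball1 d R hx₀ hx (by linarith [ht.2]) (le_of_lt ht.1) (by ring)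
    have := hc _ hzmem v
    rw [real_inner_comm] at this
    linarith
  have h01 := hmono (Set.mem_Icc.mpr ⟨le_refl 0, zero_le_one⟩)
    (Set.mem_Icc.mpr ⟨zero_le_one, le_refl 1⟩) zero_le_one
  have hg0 : g 0 = ⟪U x₀, v⟫ := by simp [hg]
  have hxx : x₀ + v = x := by rw [hv]; abel
  have hg1 : g 1 = ⟪U x, v⟫ - b := by simp [hg, hxx]
  rw [hg0, hg1] at h01
  rw [inner_sub_left]
  linarith

lemma taylor_bound (d : ℕ) (M : ℝ) (xb : Euc d) (hxb : xb ∈ Od d)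
    (U : Euc d → Euc d) (hU2 : ContDiff ℝ 2 U)
    (hM2 : ∀ z ∈ Od d, ‖iteratedFDeriv ℝ 2 U z‖ ≤ M) :
    ∀ x ∈ Od d,
      (‖fderiv ℝ U x - fderiv ℝ U xb‖ ≤ M * ‖x - xb‖) ∧
      ‖U x - U xb - fderiv ℝ U xb (x - xb)‖ ≤ M * ‖x - xb‖ * ‖x - xb‖ := by
  set A := fderiv ℝ U with hA
  have hM0 : 0 ≤ M := le_trans (norm_nonneg _) (hM2 0 (fun i => le_refl 0))
  have hAd : Differentiable ℝ A := (hU2.fderiv_right (m := 1) (by norm_num)).differentiable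
    one_ne_zero
  have hAop : ∀ z ∈ Od d, ‖fderiv ℝ A z‖ ≤ M := by
    intro z hz
    refine le_trans (ContinuousLinearMap.opNorm_le_bound _ (norm_nonneg _) fun ξ => ?_)
      (hM2 z hz)
    refine ContinuousLinearMap.opNorm_le_bound _ (by positivity) fun η => ?_
    have he : fderiv ℝ A z ξ η = iteratedFDeriv ℝ 2 U z ![ξ, η] := by
      rw [iteratedFDeriv_two_apply]; simp [hA]
    rw [he]
    calc ‖iteratedFDeriv ℝ 2 U z ![ξ, η]‖
        ≤ ‖iteratedFDeriv ℝ 2 U z‖ * ∏ i, ‖(![ξ, η]) i‖ :=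
          ContinuousMultilinearMap.le_opNorm _ _
      _ = ‖iteratedFDeriv ℝ 2 U z‖ * ‖ξ‖ * ‖η‖ := by
          simp [Fin.prod_univ_two]; ring
  have hALip : ∀ x ∈ Od d, ‖A x - A xb‖ ≤ M * ‖x - xb‖ := by
    intro x hx
    exact (convex_Od d).norm_image_sub_le_of_norm_fderiv_le
      (fun z _ => hAd z) hAop hxb hx
  intro x hx
  refine ⟨hALip x hx, ?_⟩
  have hseg : segment ℝ xb x ⊆ Od d := (convex_Od d).segment_subset hxb hx
  refine (convex_segment xb x).norm_image_sub_le_of_norm_fderiv_le'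
    (f := U) (φ := A xb) (C := M * ‖x - xb‖)
    (fun z _ => hU2.differentiable two_ne_zero z) ?_
    (left_mem_segment ℝ xb x) (right_mem_segment ℝ xb x)
  intro z hz
  obtain ⟨t, ht, rfl⟩ := by rwa [segment_eq_image'] at hz
  have h1 : ‖xb + t • (x - xb) - xb‖ = |t| * ‖x - xb‖ := by
    rw [add_sub_cancel_left, norm_smul, Real.norm_eq_abs]
  have h2 : |t| * ‖x - xb‖ ≤ ‖x - xb‖ := by
    have : |t| ≤ 1 := abs_le.mpr ⟨by linarith [ht.1], ht.2⟩
    nlinarith [norm_nonneg (x - xb)]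
  calc ‖A (xb + t • (x - xb)) - A xb‖ ≤ M * ‖xb + t • (x - xb) - xb‖ :=
        hALip _ (hseg (by rw [segment_eq_image']; exact ⟨t, ht, rfl⟩))
    _ ≤ M * ‖x - xb‖ := by rw [h1]; exact mul_le_mul_of_nonneg_left h2 hM0


set_option maxHeartbeats 2000000 in
theorem consistency_aux
    (d : ℕ) (hd : 1 ≤ d)
    (F G : Euc d → Euc d → Euc d)
    (r lam : ℝ) (hr : 0 < r) (hlam : 0 ≤ lam) (T : Euc d →L[ℝ] Euc d)
    (R₀ : ℝ) (hR₀ : 0 < R₀)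
    (U : Euc d → Euc d) (hU2 : ContDiff ℝ 2 U)
    (hUbdd : ∃ M : ℝ, ∀ x ∈ Od d, ‖fderiv ℝ U x‖ ≤ M ∧ ‖iteratedFDeriv ℝ 2 U x‖ ≤ M)
    (hUsol : ContinuousOn U (Od d) ∧
      ∃ R₁ ≥ R₀, ∀ R ≥ R₁, ∀ V : Euc d, ∀ y ∈ Od d, ∀ x₀ ∈ Ball1 d R,
        (∀ x ∈ Ball1 d R, x ≠ x₀ → ⟪U x₀ - V, x₀ - y⟫ < ⟪U x - V, x - y⟫) →
        ⟪G x₀ (U x₀), x₀ - y⟫ + ⟪F x₀ (U x₀), U x₀ - V⟫ ≤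
          r * ⟪U x₀, x₀ - y⟫
            + lam * ⟪U x₀ - ContinuousLinearMap.adjoint T (U (T x₀)), x₀ - y⟫)
    (hUpos : ∀ x ∈ Od d, ∀ ξ : Euc d, ξ ≠ 0 → 0 < ⟪ξ, fderiv ℝ U x ξ⟫) :
    ∀ x ∈ Od d, ∀ i,
      (0 < x i →
        r * U x i + fderiv ℝ (fun z : Euc d => U z i) x (F x (U x))
          + lam * (U x i - ContinuousLinearMap.adjoint T (U (T x)) i)
          = G x (U x) i) ∧
      (x i = 0 →
        r * U x i + fderiv ℝ (fun z : Euc d => U z i) x (F x (U x))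
          + lam * (U x i - ContinuousLinearMap.adjoint T (U (T x)) i)
          ≤ G x (U x) i) := by
  intro xb hxb i
  obtain ⟨M, hMb⟩ := hUbdd
  obtain ⟨hUcont, R₁, hR₁R₀, hsol⟩ := hUsol
  set A := fderiv ℝ U with hA
  set R : ℝ := max R₁ (∑ j, xb j) with hR
  have hRR₁ : R₁ ≤ R := le_max_left _ _
  have hxbB : xb ∈ Ball1 d R := ⟨hxb, le_max_right _ _⟩
  have hR0 : (0 : ℝ) ≤ R := le_trans (le_trans hR₀.le hR₁R₀) (le_max_left _ _)
  obtain ⟨c, hcpos, hc⟩ := coercive d hd R hR0 U hU2 hUpos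
  have hmono := mono_quant d R c U hU2 hc
  have htay := taylor_bound d M xb hxb U hU2 (fun z hz => (hMb z hz).2)
  have hM0 : 0 ≤ M := le_trans (norm_nonneg _) (hMb 0 (fun j => le_refl 0)).2
  set ε : ℝ := c / (M + 1) with hεdef
  have hε : 0 < ε := by positivity
  -- the key differential inequality in all admissible directions
  have hkey : ∀ y ∈ Od d, ‖xb - y‖ < ε →
      0 ≤ r * ⟪U xb, xb - y⟫
        + lam * ⟪U xb - ContinuousLinearMap.adjoint T (U (T xb)), xb - y⟫
        - ⟪G xb (U xb), xb - y⟫ + ⟪A xb (F xb (U xb)), xb - y⟫ := by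
    intro y hy hyd
    set w : Euc d := xb - y with hw
    set Aw : Euc d := (ContinuousLinearMap.adjoint (A xb)) w with hAw
    set V : Euc d := U xb + Aw with hV
    have hUxbV : U xb - V = -Aw := by rw [hV]; exact sub_add_cancel_left _ _
    have hmin : ∀ x ∈ Ball1 d R, x ≠ xb → ⟪U xb - V, xb - y⟫ < ⟪U x - V, x - y⟫ := by
      intro x hxB hxne
      have hs : 0 < ‖x - xb‖ := by
        rw [norm_pos_iff, sub_ne_zero]; exact hxne
      have hid1 : ⟪U x - V, x - y⟫ =
          ⟪U x - U xb, x - xb⟫ + ⟪U x - U xb, w⟫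
            - (⟪A xb (x - xb), w⟫ + ⟪Aw, w⟫) := by
        have e1 : U x - V = (U x - U xb) - Aw := by rw [hV]; abel
        have e2 : x - y = (x - xb) + w := by rw [hw]; abel
        have e3 : ⟪Aw, x - xb⟫ = ⟪A xb (x - xb), w⟫ := by
          rw [hAw, ContinuousLinearMap.adjoint_inner_left, real_inner_comm]
        rw [e1, e2, inner_sub_left, inner_add_right, inner_add_right, e3]
      have hid2 : ⟪U xb - V, xb - y⟫ = -⟪Aw, w⟫ := by
        rw [hUxbV, ← hw, inner_neg_left]
      have h1 : c * ‖x - xb‖ ^ 2 ≤ ⟪U x - U xb, x - xb⟫ := hmono x hxB xb hxbB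
      have h2 : ‖U x - U xb - A xb (x - xb)‖ ≤ M * ‖x - xb‖ * ‖x - xb‖ :=
        (htay x hxB.1).2
      have h3 : -(M * ‖x - xb‖ * ‖x - xb‖ * ‖w‖) ≤ ⟪U x - U xb - A xb (x - xb), w⟫ := by
        have ha := abs_real_inner_le_norm (U x - U xb - A xb (x - xb)) w
        have hb := mul_le_mul_of_nonneg_right h2 (norm_nonneg w)
        have hn := neg_abs_le ⟪U x - U xb - A xb (x - xb), w⟫
        linarith
      have h4 : M * ‖w‖ < c := by
        have hq1 : M * ‖w‖ ≤ (M + 1) * ‖w‖ := by nlinarith [norm_nonneg w]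
        have hq2 : (M + 1) * ‖w‖ < (M + 1) * (c / (M + 1)) :=
          mul_lt_mul_of_pos_left hyd (by linarith)
        have hq3 : (M + 1) * (c / (M + 1)) = c := by field_simp
        linarith
      have h5 : ⟪U x - U xb - A xb (x - xb), w⟫ =
          ⟪U x - U xb, w⟫ - ⟪A xb (x - xb), w⟫ := inner_sub_left _ _ _
      have h6 : 0 < c * ‖x - xb‖ ^ 2 - M * ‖x - xb‖ * ‖x - xb‖ * ‖w‖ := by
        have hh := mul_pos (mul_pos hs hs) (sub_pos.mpr h4)
        nlinarith [hh]
      rw [hid1, hid2]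
      linarith [h1, h3, h5, h6]
    have happly := hsol R hRR₁ V y hy xb hxbB hmin
    rw [hUxbV, inner_neg_right, ContinuousLinearMap.adjoint_inner_right] at happly
    linarith
  -- coordinate form of the derivative
  have hcoord : fderiv ℝ (fun z : Euc d => U z i) xb (F xb (U xb))
      = A xb (F xb (U xb)) i := by
    have hUd : HasFDerivAt U (A xb) xb := (hU2.differentiable two_ne_zero xb).hasFDerivAt
    have h : HasFDerivAt (fun z : Euc d => U z i)
        ((EuclideanSpace.proj (𝕜 := ℝ) i).comp (A xb)) xb :=
      (EuclideanSpace.proj (𝕜 := ℝ) i).hasFDerivAt.comp xb hUd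
    rw [h.fderiv]; rfl
  have hinner : ∀ v : Euc d, ∀ t : ℝ,
      ⟪v, t • EuclideanSpace.single i (1 : ℝ)⟫ = t * v i := by
    intro v t
    rw [real_inner_smul_right, EuclideanSpace.inner_single_right]
    simp
  -- the "≤" inequality, valid everywhere
  have hle : r * U xb i + A xb (F xb (U xb)) i
      + lam * (U xb i - ContinuousLinearMap.adjoint T (U (T xb)) i)
      ≤ G xb (U xb) i := by
    set t : ℝ := ε / 2 with ht
    have ht0 : 0 < t := by positivity
    set y : Euc d := xb + t • EuclideanSpace.single i (1 : ℝ) with hy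
    have hyOd : y ∈ Od d := by
      intro j
      by_cases hj : j = i
      · subst hj
        have := hxb j
        simp only [hy, PiLp.add_apply, PiLp.smul_apply, EuclideanSpace.single_apply,
          smul_eq_mul]
        simp only [if_true, mul_one]
        linarith
      · have := hxb j
        simp only [hy, PiLp.add_apply, PiLp.smul_apply, EuclideanSpace.single_apply,
          if_neg hj, smul_eq_mul, mul_zero, add_zero]
        exact this
    have hwy : xb - y = -(t • EuclideanSpace.single i (1 : ℝ)) := by
      rw [hy]; exact sub_add_cancel_left _ _
    have hnorm : ‖xb - y‖ < ε := by
      rw [hwy, norm_neg, norm_smul, Real.norm_eq_abs, abs_of_pos ht0,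
        EuclideanSpace.norm_single, norm_one, mul_one]
      rw [ht]; linarith
    have h := hkey y hyOd hnorm
    rw [hwy] at h
    simp only [inner_neg_right, hinner] at h
    have hsub : (U xb - ContinuousLinearMap.adjoint T (U (T xb))) i
        = U xb i - ContinuousLinearMap.adjoint T (U (T xb)) i := rfl
    rw [hsub] at h
    nlinarith [h, ht0]
  refine ⟨?_, ?_⟩
  · intro hpos
    -- the "≥" inequality when xb i > 0
    have hge : G xb (U xb) i ≤ r * U xb i + A xb (F xb (U xb)) i
        + lam * (U xb i - ContinuousLinearMap.adjoint T (U (T xb)) i) := by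
      set t : ℝ := min (xb i) (ε / 2) with ht
      have ht0 : 0 < t := lt_min hpos (by positivity)
      set y : Euc d := xb - t • EuclideanSpace.single i (1 : ℝ) with hy
      have hyOd : y ∈ Od d := by
        intro j
        by_cases hj : j = i
        · subst hj
          have h1 : t ≤ xb j := min_le_left _ _
          simp only [hy, PiLp.sub_apply, PiLp.smul_apply, EuclideanSpace.single_apply,
            smul_eq_mul]
          simp only [if_true, mul_one]
          linarith
        · have := hxb j
          simp only [hy, PiLp.sub_apply, PiLp.smul_apply, EuclideanSpace.single_apply,
            if_neg hj, smul_eq_mul, mul_zero, sub_zero]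
          exact this
      have hwy : xb - y = t • EuclideanSpace.single i (1 : ℝ) := by
        rw [hy]; exact sub_sub_cancel _ _
      have hnorm : ‖xb - y‖ < ε := by
        rw [hwy, norm_smul, Real.norm_eq_abs, abs_of_pos ht0,
          EuclideanSpace.norm_single, norm_one, mul_one]
        calc t ≤ ε / 2 := min_le_right _ _
          _ < ε := by linarith
      have h := hkey y hyOd hnorm
      rw [hwy] at h
      simp only [hinner] at h
      have hsub : (U xb - ContinuousLinearMap.adjoint T (U (T xb))) i
          = U xb i - ContinuousLinearMap.adjoint T (U (T xb)) i := rfl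
      rw [hsub] at h
      nlinarith [h, ht0]
    rw [hcoord]
    linarith
  · intro _
    rw [hcoord]
    linarith


/-- Proposition 2.3 (consistency): a `W^{2,∞}` monotone solution with everywhere positive
definite Jacobian satisfies the master equation classically where `x_i > 0`, and the
corresponding inequality where `x_i = 0`. -/
theorem consistency_monotone_stationary
    (d : ℕ) (hd : 1 ≤ d)
    (F G : Euc d → Euc d → Euc d)
    (hFc : Continuous fun q : Euc d × Euc d => F q.1 q.2)
    (hGc : Continuous fun q : Euc d × Euc d => G q.1 q.2)
    (r lam : ℝ) (hr : 0 < r) (hlam : 0 ≤ lam) (T : Euc d →L[ℝ] Euc d)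
    -- Hypothesis 1
    (hyp1F : ∀ x ∈ Od d, ∀ p : Euc d, ∀ i, x i = 0 → F x p i ≤ 0)
    (hyp1T : ∀ x ∈ Od d, T x ∈ Od d)
    -- Hypothesis 2
    (R₀ : ℝ) (hR₀ : 0 < R₀)
    (hyp2F : ∀ x ∈ Od d, ∀ p : Euc d, R₀ ≤ ∑ i, x i → 0 ≤ ∑ i, F x p i)
    (hyp2T : ∀ R ≥ R₀, ∀ x ∈ Ball1 d R, T x ∈ Ball1 d R)
    -- `U ∈ W^{2,∞}`
    (U : Euc d → Euc d) (hU2 : ContDiff ℝ 2 U)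
    (hUbdd : ∃ M : ℝ, ∀ x ∈ Od d, ‖fderiv ℝ U x‖ ≤ M ∧ ‖iteratedFDeriv ℝ 2 U x‖ ≤ M)
    -- `U` is a monotone solution
    (hUsol : IsMonotoneSolS d F G r lam T R₀ U)
    -- the Jacobian of `U` is positive definite everywhere on `O_d`
    (hUpos : ∀ x ∈ Od d, ∀ ξ : Euc d, ξ ≠ 0 → 0 < ⟪ξ, fderiv ℝ U x ξ⟫) :
    ∀ x ∈ Od d, ∀ i,
      (0 < x i →
        r * U x i + fderiv ℝ (fun z : Euc d => U z i) x (F x (U x))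
          + lam * (U x i - ContinuousLinearMap.adjoint T (U (T x)) i)
          = G x (U x) i) ∧
      (x i = 0 →
        r * U x i + fderiv ℝ (fun z : Euc d => U z i) x (F x (U x))
          + lam * (U x i - ContinuousLinearMap.adjoint T (U (T x)) i)
          ≤ G x (U x) i) := by
  
  exact consistency_aux d hd F G r lam hr hlam T R₀ hR₀ U hU2 hUbdd hUsol hUpos
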